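/- Let φ : ℝ → ℝ satisfy the activation assumption, and let m ∈ ℕ₀. Then the function φ_m := φ − Σ_{k=0}^{m−1} Δ_k(φ)·s_k is m times pseudo-differentiable, and its m-fold pseudo-derivative φ_m^{(m)} lies in L²(γ). -/

import Mathlib

open MeasureTheory ProbabilityTheory Filter Set

noncomputable section

/-- The standard Gaussian measure `N(0,1)` on `ℝ`. -/
def stdGaussian : Measure ℝ := gaussianReal 0 1

/-- `g` is a pseudo-derivative of `f`. -/
def IsPseudoDeriv (f g : ℝ → ℝ) : Prop :=
  (∀ a b : ℝ, IntegrableOn g (Set.Icc a b) volume) ∧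
  ∀ x : ℝ, f x = f 0 + ∫ t in (0:ℝ)..x, g t

/-- `g` is an `m`-fold pseudo-derivative of `f`. -/
def IsIterPseudoDeriv (m : ℕ) (f g : ℝ → ℝ) : Prop :=
  ∃ gs : ℕ → ℝ → ℝ, gs 0 = f ∧ gs m = g ∧ ∀ i < m, IsPseudoDeriv (gs i) (gs (i + 1))

/-- The reference activation `s_k(x) = sgn(x) x^k / (2 k!)`. -/
def refAct (k : ℕ) (x : ℝ) : ℝ := Real.sign x * x ^ k / (2 * k.factorial)

/-- The activation assumption: `φ` is smooth with polynomially bounded derivatives away from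
zero (on `(0,∞)` and on `(−∞,0)`), `φ(0)` is the average of the one-sided limits at `0`,
and `φ` is not the zero function. -/
def IsActivation (φ : ℝ → ℝ) : Prop :=
  ContDiffOn ℝ (⊤ : ℕ∞) φ (Set.Ioi (0 : ℝ)) ∧
  ContDiffOn ℝ (⊤ : ℕ∞) φ (Set.Iio (0 : ℝ)) ∧
  (∀ m : ℕ, ∃ a b q : ℝ, 0 < a ∧ 0 < b ∧ 0 < q ∧
    ∀ x : ℝ, 0 < x →
      |iteratedDerivWithin m φ (Set.Ioi (0 : ℝ)) x| ≤ a * |x| ^ q + b) ∧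
  (∀ m : ℕ, ∃ a b q : ℝ, 0 < a ∧ 0 < b ∧ 0 < q ∧
    ∀ x : ℝ, x < 0 →
      |iteratedDerivWithin m φ (Set.Iio (0 : ℝ)) x| ≤ a * |x| ^ q + b) ∧
  φ 0 = (limUnder (nhdsWithin 0 (Set.Ioi (0 : ℝ))) φ +
         limUnder (nhdsWithin 0 (Set.Iio (0 : ℝ))) φ) / 2 ∧
  φ ≠ 0

/-- `Δ_k(φ) = φ^{(k)}(0+) − φ^{(k)}(0−)`, the jump of the `k`-th derivative at zero. -/
def deltaK (φ : ℝ → ℝ) (k : ℕ) : ℝ :=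
  limUnder (nhdsWithin 0 (Set.Ioi (0 : ℝ)))
      (iteratedDerivWithin k φ (Set.Ioi (0 : ℝ))) -
  limUnder (nhdsWithin 0 (Set.Iio (0 : ℝ)))
      (iteratedDerivWithin k φ (Set.Iio (0 : ℝ)))


/-! ### Auxiliary development -/

namespace ActivationAux

open intervalIntegral

instance : IsProbabilityMeasure stdGaussian :=
  inferInstanceAs (IsProbabilityMeasure (gaussianReal 0 1))

lemma right_integrableOn {g : ℝ → ℝ}
    (hg : ContinuousOn g (Set.Ioi 0))
    (hb : ∃ a b q : ℝ, 0 < a ∧ 0 < b ∧ 0 < q ∧ ∀ x : ℝ, 0 < x → |g x| ≤ a * |x| ^ q + b) :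
    ∀ c : ℝ, IntegrableOn g (Set.Ioc 0 c) volume := by
  intro c
  rcases le_or_gt c 0 with hc | hc
  · rw [Set.Ioc_eq_empty (by exact fun h => absurd (h.trans_le hc) (lt_irrefl 0))]
    simp
  · obtain ⟨a, b, q, ha, hb0, hq, hbd⟩ := hb
    refine ⟨(hg.mono Set.Ioc_subset_Ioi_self).aestronglyMeasurable measurableSet_Ioc, ?_⟩
    apply HasFiniteIntegral.restrict_of_bounded (C := a * c ^ q + b) measure_Ioc_lt_top
    rw [ae_restrict_iff' measurableSet_Ioc]
    refine ae_of_all _ fun x hx => ?_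
    have h1 : |g x| ≤ a * |x| ^ q + b := hbd x hx.1
    have h2 : |x| ^ q ≤ c ^ q := by
      rw [abs_of_pos hx.1]
      exact Real.rpow_le_rpow hx.1.le hx.2 hq.le
    calc ‖g x‖ = |g x| := rfl
      _ ≤ a * |x| ^ q + b := h1
      _ ≤ a * c ^ q + b := by nlinarith

lemma right_key {f g : ℝ → ℝ}
    (hg : ContinuousOn g (Set.Ioi 0))
    (hd : ∀ x ∈ Set.Ioi (0:ℝ), HasDerivAt f (g x) x)
    (hb : ∃ a b q : ℝ, 0 < a ∧ 0 < b ∧ 0 < q ∧ ∀ x : ℝ, 0 < x → |g x| ≤ a * |x| ^ q + b) :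
    ∃ L : ℝ, Tendsto f (nhdsWithin 0 (Set.Ioi 0)) (nhds L) ∧
      ∀ x : ℝ, 0 < x → f x = L + ∫ t in (0:ℝ)..x, g t := by
  have hioc := right_integrableOn hg hb
  have hii : ∀ x : ℝ, 0 < x → IntervalIntegrable g volume 0 x := by
    intro x hx
    rw [intervalIntegrable_iff]
    exact (hioc x).mono_set (by rw [Set.uIoc_of_le hx.le])
  have hii2 : ∀ x : ℝ, 0 < x → IntervalIntegrable g volume x 1 := by
    intro x hx
    rw [intervalIntegrable_iff]
    refine (hioc (max x 1)).mono_set fun t ht => ?_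
    rcases Set.mem_uIoc.1 ht with h | h
    · exact ⟨hx.trans h.1, h.2.trans (le_max_right x 1)⟩
    · exact ⟨one_pos.trans h.1, h.2.trans (le_max_left x 1)⟩
  have key : ∀ x : ℝ, 0 < x →
      f x = (f 1 - ∫ t in (0:ℝ)..1, g t) + ∫ t in (0:ℝ)..x, g t := by
    intro x hx
    have hftc : ∫ t in x..(1:ℝ), g t = f 1 - f x := by
      apply intervalIntegral.integral_eq_sub_of_hasDerivAt
      · intro t ht
        have ht' : t ∈ Set.Icc (min x 1) (max x 1) := by rwa [Set.uIcc] at ht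
        exact hd t (lt_of_lt_of_le (lt_min hx one_pos) ht'.1)
      · exact hii2 x hx
    have hadd : (∫ t in (0:ℝ)..x, g t) + ∫ t in x..1, g t = ∫ t in (0:ℝ)..1, g t :=
      intervalIntegral.integral_add_adjacent_intervals (hii x hx) (hii2 x hx)
    linarith [hftc, hadd]
  obtain ⟨a, b, q, ha, hb0, hq, hbd⟩ := hb
  have hA : Tendsto (fun x => ∫ t in (0:ℝ)..x, g t) (nhdsWithin 0 (Set.Ioi 0)) (nhds 0) := by
    have htend : Tendsto (fun x : ℝ => (a + b) * x) (nhdsWithin 0 (Set.Ioi 0)) (nhds 0) :=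
      (((continuous_const.mul continuous_id).tendsto' 0 0 (by simp)).mono_left nhdsWithin_le_nhds)
    apply squeeze_zero_norm' _ htend
    filter_upwards [Ioc_mem_nhdsGT_of_mem (by norm_num : (0:ℝ) ∈ Set.Ico (0:ℝ) 1)] with x hx
    have hx0 : 0 < x := hx.1
    have hbig : ‖∫ t in Set.Ioc 0 x, g t‖ ≤ (a + b) * (volume (Set.Ioc (0:ℝ) x)).toReal := by
      apply norm_setIntegral_le_of_norm_le_const_ae' measure_Ioc_lt_top
      refine ae_of_all _ fun t ht => ?_
      have h1 := hbd t ht.1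
      have h2 : |t| ^ q ≤ 1 := by
        apply Real.rpow_le_one (abs_nonneg t) _ hq.le
        rw [abs_of_pos ht.1]
        exact ht.2.trans hx.2
      calc ‖g t‖ = |g t| := rfl
        _ ≤ a * |t| ^ q + b := h1
        _ ≤ a + b := by nlinarith
    rw [Real.volume_Ioc, ENNReal.toReal_ofReal (by linarith)] at hbig
    calc ‖∫ t in (0:ℝ)..x, g t‖ = ‖∫ t in Set.Ioc 0 x, g t‖ := by
          rw [intervalIntegral.integral_of_le hx0.le]
      _ ≤ (a + b) * (x - 0) := by simpa using hbig
      _ = (a + b) * x := by ring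
  refine ⟨f 1 - ∫ t in (0:ℝ)..1, g t, ?_, key⟩
  have := (tendsto_const_nhds.add hA : Tendsto
      (fun x => (f 1 - ∫ t in (0:ℝ)..1, g t) + ∫ t in (0:ℝ)..x, g t)
      (nhdsWithin 0 (Set.Ioi 0)) (nhds ((f 1 - ∫ t in (0:ℝ)..1, g t) + 0)))
  rw [add_zero] at this
  apply this.congr'
  filter_upwards [self_mem_nhdsWithin] with x hx
  exact (key x hx).symm

lemma left_integrable {g : ℝ → ℝ}
    (hg : ContinuousOn g (Set.Iio 0))
    (hb : ∃ a b q : ℝ, 0 < a ∧ 0 < b ∧ 0 < q ∧ ∀ x : ℝ, x < 0 → |g x| ≤ a * |x| ^ q + b) :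
    ∀ x : ℝ, x < 0 → IntervalIntegrable g volume x 0 := by
  set G : ℝ → ℝ := fun x => -g (-x) with hG
  have hmap : ∀ x : ℝ, x ∈ Set.Ioi (0:ℝ) → -x ∈ Set.Iio (0:ℝ) := fun x hx => by
    simpa using neg_neg_iff_pos.2 (Set.mem_Ioi.1 hx)
  have hGc : ContinuousOn G (Set.Ioi 0) := by
    refine (ContinuousOn.comp hg (continuous_neg.continuousOn) hmap).neg
  have hGb : ∃ a b q : ℝ, 0 < a ∧ 0 < b ∧ 0 < q ∧
      ∀ x : ℝ, 0 < x → |G x| ≤ a * |x| ^ q + b := by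
    obtain ⟨a, b, q, ha, hb0, hq, hbd⟩ := hb
    refine ⟨a, b, q, ha, hb0, hq, fun x hx => ?_⟩
    have := hbd (-x) (by simpa using neg_neg_iff_pos.2 hx)
    simpa [hG, abs_neg] using this
  have hGioc := right_integrableOn hGc hGb
  intro x hx
  have h1 : IntervalIntegrable G volume 0 (-x) := by
    rw [intervalIntegrable_iff]
    exact (hGioc (-x)).mono_set (by rw [Set.uIoc_of_le (by linarith)])
  have h2 : IntervalIntegrable (fun t => g (-t)) volume 0 (-x) := by
    have heq : (fun t => g (-t)) = -G := by funext t; simp [hG]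
    rw [heq]; exact h1.neg
  have h3 : IntervalIntegrable (fun t => g (-t)) volume (-x) 0 := h2.symm
  have h4 : IntervalIntegrable (fun t => g (-t)) volume (-x) (-0) := by
    rw [neg_zero]; exact h3
  exact (IntervalIntegrable.iff_comp_neg (a := x) (b := 0) (f := g)).mpr h4

lemma left_key {f g : ℝ → ℝ}
    (hg : ContinuousOn g (Set.Iio 0))
    (hd : ∀ x ∈ Set.Iio (0:ℝ), HasDerivAt f (g x) x)
    (hb : ∃ a b q : ℝ, 0 < a ∧ 0 < b ∧ 0 < q ∧ ∀ x : ℝ, x < 0 → |g x| ≤ a * |x| ^ q + b) :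
    (∀ x : ℝ, x < 0 → IntervalIntegrable g volume x 0) ∧
    ∃ L : ℝ, Tendsto f (nhdsWithin 0 (Set.Iio 0)) (nhds L) ∧
      ∀ x : ℝ, x < 0 → f x = L + ∫ t in (0:ℝ)..x, g t := by
  set F : ℝ → ℝ := fun x => f (-x) with hF
  set G : ℝ → ℝ := fun x => -g (-x) with hG
  have hmap : ∀ x : ℝ, x ∈ Set.Ioi (0:ℝ) → -x ∈ Set.Iio (0:ℝ) := fun x hx => by
    simpa using neg_neg_iff_pos.2 (Set.mem_Ioi.1 hx)
  have hGc : ContinuousOn G (Set.Ioi 0) := by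
    refine (ContinuousOn.comp hg (continuous_neg.continuousOn) hmap).neg
  have hGd : ∀ x ∈ Set.Ioi (0:ℝ), HasDerivAt F (G x) x := by
    intro x hx
    have h1 : HasDerivAt (fun y : ℝ => -y) (-1) x := (hasDerivAt_id x).neg
    have h2 := (hd (-x) (hmap x hx)).comp x h1
    simpa [hF, hG, mul_neg_one, Function.comp_def] using h2
  have hGb : ∃ a b q : ℝ, 0 < a ∧ 0 < b ∧ 0 < q ∧
      ∀ x : ℝ, 0 < x → |G x| ≤ a * |x| ^ q + b := by
    obtain ⟨a, b, q, ha, hb0, hq, hbd⟩ := hb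
    refine ⟨a, b, q, ha, hb0, hq, fun x hx => ?_⟩
    have := hbd (-x) (by simpa using neg_neg_iff_pos.2 hx)
    simpa [hG, abs_neg] using this
  have hint : ∀ x : ℝ, x < 0 → IntervalIntegrable g volume x 0 :=
    left_integrable hg hb
  obtain ⟨L, hLt, hLk⟩ := right_key hGc hGd hGb
  refine ⟨hint, L, ?_, ?_⟩
  · have hneg : Tendsto (fun x : ℝ => -x) (nhdsWithin 0 (Set.Iio 0))
        (nhdsWithin 0 (Set.Ioi 0)) := by
      have := ContinuousWithinAt.tendsto_nhdsWithin
        (continuous_neg.continuousWithinAt (x := (0:ℝ)) (s := Set.Iio 0))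
        (fun x hx => Set.mem_Ioi.2 (neg_pos.2 hx))
      simpa only [neg_zero] using this
    exact (hLt.comp hneg).congr (fun x => by simp [hF])
  · intro x hx
    have h1 : f x = L + ∫ t in (0:ℝ)..(-x), G t := by
      have := hLk (-x) (by linarith)
      simpa [hF] using this
    have h2 : (∫ t in (0:ℝ)..(-x), G t) = -∫ t in (0:ℝ)..(-x), g (-t) := by
      simp [hG, intervalIntegral.integral_neg]
    have h3 : (∫ t in (0:ℝ)..(-x), g (-t)) = ∫ t in x..(0:ℝ), g t := by
      have := intervalIntegral.integral_comp_neg (a := (0:ℝ)) (b := -x) (f := g)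
      simpa using this
    rw [h1, h2, h3, intervalIntegral.integral_symm]
    ring

/-! ### The piecewise derivative functions -/

def fpD (φ : ℝ → ℝ) (i : ℕ) : ℝ → ℝ := iteratedDerivWithin i φ (Set.Ioi 0)

def fmD (φ : ℝ → ℝ) (i : ℕ) : ℝ → ℝ := iteratedDerivWithin i φ (Set.Iio 0)

def LpD (φ : ℝ → ℝ) (i : ℕ) : ℝ := limUnder (nhdsWithin 0 (Set.Ioi 0)) (fpD φ i)

def LmD (φ : ℝ → ℝ) (i : ℕ) : ℝ := limUnder (nhdsWithin 0 (Set.Iio 0)) (fmD φ i)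

def DD (φ : ℝ → ℝ) (i : ℕ) (x : ℝ) : ℝ :=
  if 0 < x then fpD φ i x else if x < 0 then fmD φ i x else (LpD φ i + LmD φ i) / 2

variable {φ : ℝ → ℝ}

lemma fp_cont (h : ContDiffOn ℝ (⊤ : ℕ∞) φ (Set.Ioi 0)) (i : ℕ) :
    ContinuousOn (fpD φ i) (Set.Ioi 0) :=
  h.continuousOn_iteratedDerivWithin (by exact_mod_cast le_top) isOpen_Ioi.uniqueDiffOn

lemma fm_cont (h : ContDiffOn ℝ (⊤ : ℕ∞) φ (Set.Iio 0)) (i : ℕ) :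
    ContinuousOn (fmD φ i) (Set.Iio 0) :=
  h.continuousOn_iteratedDerivWithin (by exact_mod_cast le_top) isOpen_Iio.uniqueDiffOn

lemma fp_deriv (h : ContDiffOn ℝ (⊤ : ℕ∞) φ (Set.Ioi 0)) (i : ℕ) :
    ∀ x ∈ Set.Ioi (0:ℝ), HasDerivAt (fpD φ i) (fpD φ (i+1) x) x := by
  intro x hx
  have hu : UniqueDiffOn ℝ (Set.Ioi (0:ℝ)) := isOpen_Ioi.uniqueDiffOn
  have hdiff : DifferentiableOn ℝ (fpD φ i) (Set.Ioi 0) :=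
    h.differentiableOn_iteratedDerivWithin (by exact_mod_cast lt_top_iff_ne_top.2 (by simp)) hu
  have hdw := (hdiff x hx).hasDerivWithinAt
  rw [show fpD φ (i+1) = fun y => iteratedDerivWithin (i+1) φ (Set.Ioi 0) y from rfl]
  simp only [iteratedDerivWithin_succ]
  exact hdw.hasDerivAt (isOpen_Ioi.mem_nhds hx)

lemma fm_deriv (h : ContDiffOn ℝ (⊤ : ℕ∞) φ (Set.Iio 0)) (i : ℕ) :
    ∀ x ∈ Set.Iio (0:ℝ), HasDerivAt (fmD φ i) (fmD φ (i+1) x) x := by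
  intro x hx
  have hu : UniqueDiffOn ℝ (Set.Iio (0:ℝ)) := isOpen_Iio.uniqueDiffOn
  have hdiff : DifferentiableOn ℝ (fmD φ i) (Set.Iio 0) :=
    h.differentiableOn_iteratedDerivWithin (by exact_mod_cast lt_top_iff_ne_top.2 (by simp)) hu
  have hdw := (hdiff x hx).hasDerivWithinAt
  rw [show fmD φ (i+1) = fun y => iteratedDerivWithin (i+1) φ (Set.Iio 0) y from rfl]
  simp only [iteratedDerivWithin_succ]
  exact hdw.hasDerivAt (isOpen_Iio.mem_nhds hx)

lemma right_main (h : ContDiffOn ℝ (⊤ : ℕ∞) φ (Set.Ioi 0))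
    (hb : ∀ m : ℕ, ∃ a b q : ℝ, 0 < a ∧ 0 < b ∧ 0 < q ∧
      ∀ x : ℝ, 0 < x → |iteratedDerivWithin m φ (Set.Ioi (0 : ℝ)) x| ≤ a * |x| ^ q + b)
    (i : ℕ) :
    Tendsto (fpD φ i) (nhdsWithin 0 (Set.Ioi 0)) (nhds (LpD φ i)) ∧
      ∀ x : ℝ, 0 < x → fpD φ i x = LpD φ i + ∫ t in (0:ℝ)..x, fpD φ (i+1) t := by
  obtain ⟨L, hT, hK⟩ := right_key (fp_cont h (i+1)) (fp_deriv h i) (hb (i+1))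
  have hL : LpD φ i = L := hT.limUnder_eq
  rw [hL]
  exact ⟨hT, hK⟩

lemma left_main (h : ContDiffOn ℝ (⊤ : ℕ∞) φ (Set.Iio 0))
    (hb : ∀ m : ℕ, ∃ a b q : ℝ, 0 < a ∧ 0 < b ∧ 0 < q ∧
      ∀ x : ℝ, x < 0 → |iteratedDerivWithin m φ (Set.Iio (0 : ℝ)) x| ≤ a * |x| ^ q + b)
    (i : ℕ) :
    (∀ x : ℝ, x < 0 → IntervalIntegrable (fmD φ (i+1)) volume x 0) ∧
    Tendsto (fmD φ i) (nhdsWithin 0 (Set.Iio 0)) (nhds (LmD φ i)) ∧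
      ∀ x : ℝ, x < 0 → fmD φ i x = LmD φ i + ∫ t in (0:ℝ)..x, fmD φ (i+1) t := by
  obtain ⟨hint, L, hT, hK⟩ := left_key (fm_cont h (i+1)) (fm_deriv h i) (hb (i+1))
  have hL : LmD φ i = L := hT.limUnder_eq
  rw [hL]
  exact ⟨hint, hT, hK⟩

lemma integrableOn_singleton' (f : ℝ → ℝ) (a : ℝ) : IntegrableOn f {a} volume := by
  rw [IntegrableOn, Measure.restrict_singleton, Real.volume_singleton]
  simp

lemma DD_integrableOn (h1 : ContDiffOn ℝ (⊤ : ℕ∞) φ (Set.Ioi 0))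
    (h2 : ContDiffOn ℝ (⊤ : ℕ∞) φ (Set.Iio 0))
    (hb1 : ∀ m : ℕ, ∃ a b q : ℝ, 0 < a ∧ 0 < b ∧ 0 < q ∧
      ∀ x : ℝ, 0 < x → |iteratedDerivWithin m φ (Set.Ioi (0 : ℝ)) x| ≤ a * |x| ^ q + b)
    (hb2 : ∀ m : ℕ, ∃ a b q : ℝ, 0 < a ∧ 0 < b ∧ 0 < q ∧
      ∀ x : ℝ, x < 0 → |iteratedDerivWithin m φ (Set.Iio (0 : ℝ)) x| ≤ a * |x| ^ q + b)
    (j : ℕ) (a b : ℝ) : IntegrableOn (DD φ j) (Set.Icc a b) volume := by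
  have hsub : Set.Icc a b ⊆ Set.Ico a 0 ∪ ({0} ∪ Set.Ioc 0 b) := by
    intro x hx
    rcases lt_trichotomy x 0 with hx0 | hx0 | hx0
    · exact Or.inl ⟨hx.1, hx0⟩
    · exact Or.inr (Or.inl (by simp [hx0]))
    · exact Or.inr (Or.inr ⟨hx0, hx.2⟩)
  refine IntegrableOn.mono_set ?_ hsub
  have hIoc : IntegrableOn (DD φ j) (Set.Ioc 0 b) volume := by
    refine (right_integrableOn (fp_cont h1 j) (hb1 j) b).congr_fun ?_ measurableSet_Ioc
    intro x hx
    simp [DD, hx.1]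
  have hsing : IntegrableOn (DD φ j) ({0} : Set ℝ) volume := integrableOn_singleton' _ _
  have hIco : IntegrableOn (DD φ j) (Set.Ico a 0) volume := by
    rcases le_or_gt 0 a with ha | ha
    · rw [Set.Ico_eq_empty (by intro h; exact absurd (ha.trans_lt h) (lt_irrefl 0))]
      simp
    · have hint := left_integrable (fm_cont h2 j) (hb2 j) a ha
      rw [intervalIntegrable_iff, Set.uIoc_of_le ha.le] at hint
      have hIcofm : IntegrableOn (fmD φ j) (Set.Ico a 0) volume := by
        refine IntegrableOn.mono_set (hint.union (integrableOn_singleton' _ a)) ?_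
        intro t ht
        rcases eq_or_lt_of_le ht.1 with h | h
        · exact Or.inr (by simp [h.symm])
        · exact Or.inl ⟨h, ht.2.le⟩
      refine hIcofm.congr_fun ?_ measurableSet_Ico
      intro x hx
      simp [DD, hx.2, hx.2.not_gt]
  exact (hIco.union (hsing.union hIoc))

/-! ### refAct lemmas -/

lemma measurable_sign : Measurable Real.sign := by
  unfold Real.sign
  exact Measurable.ite measurableSet_Iio measurable_const
    (Measurable.ite measurableSet_Ioi measurable_const measurable_const)

lemma refAct_measurable (k : ℕ) : Measurable (refAct k) := by
  unfold refAct
  exact (measurable_sign.mul (measurable_id.pow_const k)).div_const _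

lemma refAct_zero (k : ℕ) : refAct k 0 = 0 := by
  simp [refAct]

lemma abs_sign_le (x : ℝ) : |Real.sign x| ≤ 1 := by
  rcases Real.sign_apply_eq x with h | h | h <;> rw [h] <;> norm_num

lemma abs_refAct_le (k : ℕ) (x : ℝ) : |refAct k x| ≤ |x| ^ k := by
  have h1 : (1:ℝ) ≤ 2 * k.factorial := by
    have := Nat.one_le_iff_ne_zero.2 (Nat.factorial_ne_zero k)
    have : (1:ℝ) ≤ (k.factorial : ℝ) := by exact_mod_cast this
    linarith
  rw [refAct, abs_div, abs_mul, abs_pow]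
  rw [abs_of_pos (by linarith : (0:ℝ) < 2 * k.factorial)]
  calc |Real.sign x| * |x| ^ k / (2 * k.factorial) ≤ 1 * |x| ^ k / 1 := by
        apply div_le_div₀ (by positivity) _ one_pos h1
        exact mul_le_mul_of_nonneg_right (abs_sign_le x) (by positivity)
    _ = |x| ^ k := by ring

lemma refAct_integrableOn (k : ℕ) (a b : ℝ) :
    IntegrableOn (refAct k) (Set.Icc a b) volume := by
  apply Measure.integrableOn_of_bounded (M := (|a| + |b|) ^ k) measure_Icc_lt_top.ne
    (refAct_measurable k).aestronglyMeasurable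
  rw [ae_restrict_iff' measurableSet_Icc]
  refine ae_of_all _ fun x hx => ?_
  have habs : |x| ≤ |a| + |b| := by
    rw [abs_le]
    constructor
    · have h1 := neg_abs_le a; have h2 := abs_nonneg b; linarith [hx.1]
    · have h1 := le_abs_self b; have h2 := abs_nonneg a; linarith [hx.2]
  calc ‖refAct k x‖ = |refAct k x| := rfl
    _ ≤ |x| ^ k := abs_refAct_le k x
    _ ≤ (|a| + |b|) ^ k := pow_le_pow_left₀ (abs_nonneg x) habs k

lemma refAct_intervalIntegrable (k : ℕ) (u v : ℝ) :
    IntervalIntegrable (refAct k) volume u v := by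
  rw [intervalIntegrable_iff]
  exact (refAct_integrableOn k (min u v) (max u v)).mono_set
    (by rw [Set.uIoc]; exact Set.Ioc_subset_Icc_self)

lemma refAct_integral (k : ℕ) (x : ℝ) :
    ∫ t in (0:ℝ)..x, refAct k t = refAct (k+1) x := by
  have hfac : ((k:ℝ) + 1) * (2 * k.factorial) = 2 * (k+1).factorial := by
    rw [Nat.factorial_succ]
    push_cast
    ring
  have hfacpos : (0:ℝ) < 2 * k.factorial := by positivity
  rcases lt_trichotomy x 0 with hx | rfl | hx
  · have hcongr : ∫ t in (0:ℝ)..x, refAct k t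
        = ∫ t in (0:ℝ)..x, -(t ^ k) / (2 * k.factorial) := by
      apply intervalIntegral.integral_congr_ae
      have hne : ∀ᵐ t : ℝ ∂volume, t ≠ 0 := by
        rw [ae_iff]
        have : {t : ℝ | ¬t ≠ 0} = {0} := by ext t; simp
        rw [this, Real.volume_singleton]
      filter_upwards [hne] with t ht hmem
      rw [Set.uIoc_of_ge hx.le] at hmem
      have ht0 : t < 0 := lt_of_le_of_ne hmem.2 ht
      rw [refAct, Real.sign_of_neg ht0]
      ring
    rw [hcongr]
    have : ∫ t in (0:ℝ)..x, -(t ^ k) / (2 * k.factorial)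
        = -(x ^ (k+1) / ((k:ℝ)+1)) / (2 * k.factorial) := by
      rw [intervalIntegral.integral_div]
      rw [intervalIntegral.integral_neg]
      rw [integral_pow]
      ring_nf
    rw [this, refAct, Real.sign_of_neg hx]
    have hgoal : -(x ^ (k+1) / ((k:ℝ)+1)) / (2 * k.factorial)
        = -1 * x ^ (k+1) / (((k:ℝ)+1) * (2 * k.factorial)) := by
      rw [← neg_div, div_div, neg_one_mul]
    rw [hgoal, hfac]
  · simp [refAct]
  · have hcongr : ∫ t in (0:ℝ)..x, refAct k t
        = ∫ t in (0:ℝ)..x, t ^ k / (2 * k.factorial) := by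
      apply intervalIntegral.integral_congr_ae
      refine ae_of_all _ fun t hmem => ?_
      rw [Set.uIoc_of_le hx.le] at hmem
      rw [refAct, Real.sign_of_pos hmem.1]
      ring
    rw [hcongr]
    have : ∫ t in (0:ℝ)..x, t ^ k / (2 * k.factorial)
        = (x ^ (k+1) / ((k:ℝ)+1)) / (2 * k.factorial) := by
      rw [intervalIntegral.integral_div, integral_pow]
      ring_nf
    rw [this, refAct, Real.sign_of_pos hx]
    have hgoal : x ^ (k+1) / ((k:ℝ)+1) / (2 * k.factorial)
        = 1 * x ^ (k+1) / (((k:ℝ)+1) * (2 * k.factorial)) := by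
      rw [div_div, one_mul]
    rw [hgoal, hfac]

/-! ### Master identity -/

lemma DD_pos {i : ℕ} {x : ℝ} (hx : 0 < x) : DD φ i x = fpD φ i x := by simp [DD, hx]

lemma DD_neg {i : ℕ} {x : ℝ} (hx : x < 0) : DD φ i x = fmD φ i x := by
  simp [DD, hx, hx.not_gt]

lemma DD_zero (i : ℕ) : DD φ i 0 = (LpD φ i + LmD φ i) / 2 := by simp [DD]

lemma DD_intervalIntegrable (h1 : ContDiffOn ℝ (⊤ : ℕ∞) φ (Set.Ioi 0))
    (h2 : ContDiffOn ℝ (⊤ : ℕ∞) φ (Set.Iio 0))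
    (hb1 : ∀ m : ℕ, ∃ a b q : ℝ, 0 < a ∧ 0 < b ∧ 0 < q ∧
      ∀ x : ℝ, 0 < x → |iteratedDerivWithin m φ (Set.Ioi (0 : ℝ)) x| ≤ a * |x| ^ q + b)
    (hb2 : ∀ m : ℕ, ∃ a b q : ℝ, 0 < a ∧ 0 < b ∧ 0 < q ∧
      ∀ x : ℝ, x < 0 → |iteratedDerivWithin m φ (Set.Iio (0 : ℝ)) x| ≤ a * |x| ^ q + b)
    (j : ℕ) (u v : ℝ) : IntervalIntegrable (DD φ j) volume u v := by
  rw [intervalIntegrable_iff]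
  exact (DD_integrableOn h1 h2 hb1 hb2 j (min u v) (max u v)).mono_set
    (by rw [Set.uIoc]; exact Set.Ioc_subset_Icc_self)

lemma DD_master (h1 : ContDiffOn ℝ (⊤ : ℕ∞) φ (Set.Ioi 0))
    (h2 : ContDiffOn ℝ (⊤ : ℕ∞) φ (Set.Iio 0))
    (hb1 : ∀ m : ℕ, ∃ a b q : ℝ, 0 < a ∧ 0 < b ∧ 0 < q ∧
      ∀ x : ℝ, 0 < x → |iteratedDerivWithin m φ (Set.Ioi (0 : ℝ)) x| ≤ a * |x| ^ q + b)
    (hb2 : ∀ m : ℕ, ∃ a b q : ℝ, 0 < a ∧ 0 < b ∧ 0 < q ∧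
      ∀ x : ℝ, x < 0 → |iteratedDerivWithin m φ (Set.Iio (0 : ℝ)) x| ≤ a * |x| ^ q + b)
    (i : ℕ) (x : ℝ) :
    DD φ i x = DD φ i 0 + deltaK φ i * refAct 0 x + ∫ t in (0:ℝ)..x, DD φ (i+1) t := by
  obtain ⟨hTp, hKp⟩ := right_main h1 hb1 i
  obtain ⟨hIntm, hTm, hKm⟩ := left_main h2 hb2 i
  have hdel : deltaK φ i = LpD φ i - LmD φ i := rfl
  have hne : ∀ᵐ t : ℝ ∂volume, t ≠ 0 := by
    rw [ae_iff]
    have : {t : ℝ | ¬t ≠ 0} = {0} := by ext t; simp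
    rw [this, Real.volume_singleton]
  rcases lt_trichotomy x 0 with hx | rfl | hx
  · have hIeq : ∫ t in (0:ℝ)..x, DD φ (i+1) t = ∫ t in (0:ℝ)..x, fmD φ (i+1) t := by
      apply intervalIntegral.integral_congr_ae
      filter_upwards [hne] with t ht hmem
      rw [Set.uIoc_of_ge hx.le] at hmem
      exact DD_neg (lt_of_le_of_ne hmem.2 ht)
    rw [hIeq, DD_zero, DD_neg hx, hKm x hx, hdel, refAct, Real.sign_of_neg hx]
    simp only [pow_zero, Nat.factorial_zero, Nat.cast_one]
    ring
  · simp [refAct_zero, intervalIntegral.integral_same]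
  · have hIeq : ∫ t in (0:ℝ)..x, DD φ (i+1) t = ∫ t in (0:ℝ)..x, fpD φ (i+1) t := by
      apply intervalIntegral.integral_congr_ae
      refine ae_of_all _ fun t hmem => ?_
      rw [Set.uIoc_of_le hx.le] at hmem
      exact DD_pos hmem.1
    rw [hIeq, DD_zero, DD_pos hx, hKp x hx, hdel, refAct, Real.sign_of_pos hx]
    simp only [pow_zero, Nat.factorial_zero, Nat.cast_one]
    ring

/-! ### Membership in L² of the Gaussian -/

lemma integrable_abs_pow_exp (k : ℕ) :
    Integrable (fun x : ℝ => |x| ^ k * Real.exp (-(1/2) * x^2)) volume := by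
  have hb : (0:ℝ) < 1/2 := by norm_num
  have h2k : Integrable (fun x : ℝ => x ^ (2*k) * Real.exp (-(1/2) * x^2)) volume := by
    have := integrable_rpow_mul_exp_neg_mul_sq hb (s := ((2*k : ℕ):ℝ))
      (lt_of_lt_of_le (by norm_num) (Nat.cast_nonneg _))
    refine this.congr (ae_of_all _ fun x => ?_)
    simp only [Real.rpow_natCast]
  have hexp := integrable_exp_neg_mul_sq hb
  refine (hexp.add h2k).mono' ?_ (ae_of_all _ fun x => ?_)
  · exact ((continuous_abs.pow k).mul
      (Real.continuous_exp.comp (by continuity))).aestronglyMeasurable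
  · have he : 0 < Real.exp (-(1/2) * x^2) := Real.exp_pos _
    have hox : |x| ^ (2*k) = x ^ (2*k) := (even_two_mul k).pow_abs x
    have habs : |x| ^ k ≤ 1 + x ^ (2*k) := by
      rcases le_or_gt (|x|) 1 with h | h
      · have h1 : |x| ^ k ≤ 1 := pow_le_one₀ (abs_nonneg x) h
        have h2 : (0:ℝ) ≤ |x| ^ (2*k) := by positivity
        rw [hox] at h2
        linarith
      · have h1 : |x| ^ k ≤ |x| ^ (2*k) := pow_le_pow_right₀ h.le (by omega)
        rw [hox] at h1
        linarith
    have hp : (0:ℝ) ≤ |x| ^ k := by positivity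
    simp only [Pi.add_apply]
    rw [Real.norm_eq_abs, abs_mul, abs_of_nonneg he.le, abs_of_nonneg hp]
    nlinarith

lemma integrable_abs_pow_stdGaussian (k : ℕ) :
    Integrable (fun x : ℝ => |x| ^ k) stdGaussian := by
  rw [_root_.stdGaussian, gaussianReal_of_var_ne_zero _ one_ne_zero]
  rw [integrable_withDensity_iff (measurable_gaussianPDF 0 1)
      (ae_of_all _ fun x => ENNReal.ofReal_lt_top)]
  refine ((integrable_abs_pow_exp k).const_mul
      ((Real.sqrt (2 * Real.pi))⁻¹)).congr (ae_of_all _ fun x => ?_)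
  simp only [gaussianPDF_def]
  rw [ENNReal.toReal_ofReal (gaussianPDFReal_nonneg _ _ _), gaussianPDFReal_def]
  simp only [NNReal.coe_one, mul_one, sub_zero]
  rw [show -(1/2)*x^2 = -x^2/2 from by ring]
  ring

lemma memLp_abs_pow (n : ℕ) : MemLp (fun x : ℝ => |x| ^ n) 2 stdGaussian := by
  rw [memLp_two_iff_integrable_sq (f := fun x : ℝ => |x| ^ n)
    (continuous_abs.pow n).aestronglyMeasurable]
  refine (integrable_abs_pow_stdGaussian (n*2)).congr (ae_of_all _ fun x => ?_)
  show |x| ^ (n*2) = (|x| ^ n) ^ 2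
  rw [pow_mul]

lemma DD_memLp (h1 : ContDiffOn ℝ (⊤ : ℕ∞) φ (Set.Ioi 0))
    (h2 : ContDiffOn ℝ (⊤ : ℕ∞) φ (Set.Iio 0))
    (hb1 : ∀ m : ℕ, ∃ a b q : ℝ, 0 < a ∧ 0 < b ∧ 0 < q ∧
      ∀ x : ℝ, 0 < x → |iteratedDerivWithin m φ (Set.Ioi (0 : ℝ)) x| ≤ a * |x| ^ q + b)
    (hb2 : ∀ m : ℕ, ∃ a b q : ℝ, 0 < a ∧ 0 < b ∧ 0 < q ∧
      ∀ x : ℝ, x < 0 → |iteratedDerivWithin m φ (Set.Iio (0 : ℝ)) x| ≤ a * |x| ^ q + b)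
    (j : ℕ) : MemLp (DD φ j) 2 stdGaussian := by
  have hsm : AEStronglyMeasurable (DD φ j) volume := by
    have hm1 : AEStronglyMeasurable (DD φ j) (volume.restrict (Set.Iio 0)) := by
      refine ((fm_cont h2 j).aestronglyMeasurable measurableSet_Iio).congr ?_
      rw [Filter.EventuallyEq, ae_restrict_iff' measurableSet_Iio]
      exact ae_of_all _ fun x hx => (DD_neg hx).symm
    have hm2 : AEStronglyMeasurable (DD φ j) (volume.restrict (Set.Ici 0)) := by
      rw [Measure.restrict_congr_set Ioi_ae_eq_Ici.symm]
      refine ((fp_cont h1 j).aestronglyMeasurable measurableSet_Ioi).congr ?_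
      rw [Filter.EventuallyEq, ae_restrict_iff' measurableSet_Ioi]
      exact ae_of_all _ fun x hx => (DD_pos hx).symm
    have hadd := hm1.add_measure hm2
    have hres : volume.restrict (Set.Iio (0:ℝ)) + volume.restrict (Set.Ici 0) = volume := by
      have := Measure.restrict_add_restrict_compl (μ := volume) (measurableSet_Iio (a := (0:ℝ)))
      rwa [Set.compl_Iio] at this
    rwa [hres] at hadd
  have hac : stdGaussian ≪ volume := by
    rw [_root_.stdGaussian]; exact gaussianReal_absolutelyContinuous 0 one_ne_zero
  have hsm' : AEStronglyMeasurable (DD φ j) stdGaussian := hsm.mono_ac hac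
  obtain ⟨a1, b1, q1, ha1, hb1', hq1, hbd1⟩ := hb1 j
  obtain ⟨a2, b2, q2, ha2, hb2', hq2, hbd2⟩ := hb2 j
  set n : ℕ := max ⌈q1⌉₊ ⌈q2⌉₊ with hn
  have hrb : ∀ q : ℝ, 0 < q → q ≤ (n:ℝ) → ∀ x : ℝ, |x| ^ q ≤ 1 + |x| ^ n := by
    intro q hq hqn x
    rcases le_or_gt (|x|) 1 with hx1 | hx1
    · have := Real.rpow_le_one (abs_nonneg x) hx1 hq.le
      have h0 : (0:ℝ) ≤ |x| ^ n := by positivity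
      linarith
    · have h1 : |x| ^ q ≤ |x| ^ ((n:ℝ)) :=
        Real.rpow_le_rpow_of_exponent_le hx1.le hqn
      rw [Real.rpow_natCast] at h1
      linarith
  have hq1n : q1 ≤ (n:ℝ) :=
    (Nat.le_ceil q1).trans (by exact_mod_cast le_max_left ⌈q1⌉₊ ⌈q2⌉₊)
  have hq2n : q2 ≤ (n:ℝ) :=
    (Nat.le_ceil q2).trans (by exact_mod_cast le_max_right ⌈q1⌉₊ ⌈q2⌉₊)
  have hbound : ∀ x : ℝ, ‖DD φ j x‖ ≤ (a1 + a2 + b1 + b2 + |DD φ j 0|) * (1 + |x| ^ n) := by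
    intro x
    have ht0 : (0:ℝ) ≤ |x| ^ n := by positivity
    have habs0 : (0:ℝ) ≤ |DD φ j 0| := abs_nonneg _
    rcases lt_trichotomy x 0 with hx | rfl | hx
    · have h1 := hbd2 x hx
      have h2 := hrb q2 hq2 hq2n x
      rw [show ‖DD φ j x‖ = |fmD φ j x| from by rw [DD_neg hx]; rfl]
      have h1' : |fmD φ j x| ≤ a2 * |x| ^ q2 + b2 := h1
      have h3 : a2 * |x| ^ q2 ≤ a2 * (1 + |x| ^ n) := mul_le_mul_of_nonneg_left h2 ha2.le
      linarith [mul_nonneg ha1.le ht0, mul_nonneg hb1'.le ht0, mul_nonneg hb2'.le ht0,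
        mul_nonneg habs0 ht0]
    · rw [show ‖DD φ j 0‖ = |DD φ j 0| from rfl]
      linarith [mul_nonneg ha1.le ht0, mul_nonneg hb1'.le ht0, mul_nonneg hb2'.le ht0,
        mul_nonneg ha2.le ht0, mul_nonneg habs0 ht0]
    · have h1 := hbd1 x hx
      have h2 := hrb q1 hq1 hq1n x
      rw [show ‖DD φ j x‖ = |fpD φ j x| from by rw [DD_pos hx]; rfl]
      have h1' : |fpD φ j x| ≤ a1 * |x| ^ q1 + b1 := h1
      have h3 : a1 * |x| ^ q1 ≤ a1 * (1 + |x| ^ n) := mul_le_mul_of_nonneg_left h2 ha1.le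
      linarith [mul_nonneg ha2.le ht0, mul_nonneg hb1'.le ht0, mul_nonneg hb2'.le ht0,
        mul_nonneg habs0 ht0]
  have hmaj : MemLp (fun x : ℝ => (a1 + a2 + b1 + b2 + |DD φ j 0|) * (1 + |x| ^ n))
      2 stdGaussian := by
    have hone : MemLp (fun _ : ℝ => (1:ℝ)) 2 stdGaussian := memLp_const 1
    have habs := memLp_abs_pow n
    exact (hone.add habs).const_mul _
  refine MemLp.of_le hmaj hsm' (ae_of_all _ fun x => ?_)
  calc ‖DD φ j x‖ ≤ (a1 + a2 + b1 + b2 + |DD φ j 0|) * (1 + |x| ^ n) := hbound x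
    _ ≤ ‖(a1 + a2 + b1 + b2 + |DD φ j 0|) * (1 + |x| ^ n)‖ := le_abs_self _

end ActivationAux

/-- for an activation `φ` and `m ∈ ℕ`, the function
`φ_m = φ − Σ_{k<m} Δ_k(φ) s_k` is `m` times pseudo-differentiable with `m`-fold
pseudo-derivative in `L²(γ)`. -/
theorem activation_smoothing (φ : ℝ → ℝ) (hφ : IsActivation φ) (m : ℕ) :
    ∃ g : ℝ → ℝ,
      IsIterPseudoDeriv m
        (fun x => φ x - ∑ k ∈ Finset.range m, deltaK φ k * refAct k x) g ∧
      MemLp g 2 stdGaussian := by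
  obtain ⟨h1, h2, hb1, hb2, h0, -⟩ := hφ
  classical
  refine ⟨ActivationAux.DD φ m,
    ⟨fun i x => ActivationAux.DD φ i x
        - ∑ k ∈ Finset.Ico i m, deltaK φ k * refAct (k - i) x, ?_, ?_, ?_⟩, ?_⟩
  · funext x
    have hsum : ∑ k ∈ Finset.Ico 0 m, deltaK φ k * refAct (k - 0) x
        = ∑ k ∈ Finset.range m, deltaK φ k * refAct k x := by
      rw [Finset.range_eq_Ico]
      exact Finset.sum_congr rfl fun k _ => by rw [Nat.sub_zero]
    show ActivationAux.DD φ 0 x - ∑ k ∈ Finset.Ico 0 m, deltaK φ k * refAct (k - 0) x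
        = φ x - ∑ k ∈ Finset.range m, deltaK φ k * refAct k x
    rw [hsum]
    congr 1
    rcases lt_trichotomy x 0 with hx | rfl | hx
    · rw [ActivationAux.DD_neg hx]
      show iteratedDerivWithin 0 φ (Set.Iio 0) x = φ x
      rw [iteratedDerivWithin_zero]
    · rw [ActivationAux.DD_zero, h0]
      have hp : ActivationAux.LpD φ 0 = limUnder (nhdsWithin 0 (Set.Ioi (0:ℝ))) φ := by
        rw [ActivationAux.LpD, ActivationAux.fpD, iteratedDerivWithin_zero]
      have hm' : ActivationAux.LmD φ 0 = limUnder (nhdsWithin 0 (Set.Iio (0:ℝ))) φ := by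
        rw [ActivationAux.LmD, ActivationAux.fmD, iteratedDerivWithin_zero]
      rw [hp, hm']
    · rw [ActivationAux.DD_pos hx]
      show iteratedDerivWithin 0 φ (Set.Ioi 0) x = φ x
      rw [iteratedDerivWithin_zero]
  · funext x
    show ActivationAux.DD φ m x - ∑ k ∈ Finset.Ico m m, deltaK φ k * refAct (k - m) x
        = ActivationAux.DD φ m x
    rw [Finset.Ico_self]
    simp
  · intro i him
    constructor
    · intro a b
      refine (ActivationAux.DD_integrableOn h1 h2 hb1 hb2 (i+1) a b).sub ?_
      refine integrable_finset_sum _ fun k _ => ?_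
      exact ((ActivationAux.refAct_integrableOn (k - (i+1)) a b).const_mul _)
    · intro x
      show ActivationAux.DD φ i x - ∑ k ∈ Finset.Ico i m, deltaK φ k * refAct (k - i) x
          = (ActivationAux.DD φ i 0 - ∑ k ∈ Finset.Ico i m, deltaK φ k * refAct (k - i) 0)
            + ∫ t in (0:ℝ)..x, (ActivationAux.DD φ (i+1) t
                - ∑ k ∈ Finset.Ico (i+1) m, deltaK φ k * refAct (k - (i+1)) t)
      have hM := ActivationAux.DD_master h1 h2 hb1 hb2 i x
      have hDint := ActivationAux.DD_intervalIntegrable h1 h2 hb1 hb2 (i+1) 0 x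
      have hSint : IntervalIntegrable
          (fun t => ∑ k ∈ Finset.Ico (i+1) m, deltaK φ k * refAct (k - (i+1)) t)
          volume 0 x := by
        have heq : (fun t => ∑ k ∈ Finset.Ico (i+1) m, deltaK φ k * refAct (k - (i+1)) t)
            = ∑ k ∈ Finset.Ico (i+1) m, (fun t => deltaK φ k * refAct (k - (i+1)) t) := by
          funext t
          rw [Finset.sum_apply]
        rw [heq]
        exact IntervalIntegrable.sum _ fun k _ =>
          (ActivationAux.refAct_intervalIntegrable (k - (i+1)) 0 x).const_mul _
      have hsplit : (∫ t in (0:ℝ)..x, (ActivationAux.DD φ (i+1) t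
              - ∑ k ∈ Finset.Ico (i+1) m, deltaK φ k * refAct (k - (i+1)) t))
          = (∫ t in (0:ℝ)..x, ActivationAux.DD φ (i+1) t)
            - ∑ k ∈ Finset.Ico (i+1) m, deltaK φ k * refAct (k - i) x := by
        rw [intervalIntegral.integral_sub hDint hSint]
        congr 1
        rw [intervalIntegral.integral_finset_sum fun k _ =>
          (ActivationAux.refAct_intervalIntegrable (k - (i+1)) 0 x).const_mul _]
        refine Finset.sum_congr rfl fun k hk => ?_
        rw [intervalIntegral.integral_const_mul, ActivationAux.refAct_integral]
        have hki := (Finset.mem_Ico.1 hk).1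
        congr 2
        omega
      have hIcoeq : ∑ k ∈ Finset.Ico i m, deltaK φ k * refAct (k - i) x
          = deltaK φ i * refAct 0 x
            + ∑ k ∈ Finset.Ico (i+1) m, deltaK φ k * refAct (k - i) x := by
        rw [Finset.sum_eq_sum_Ico_succ_bot him]
        rw [Nat.sub_self]
      have hzero : ∑ k ∈ Finset.Ico i m, deltaK φ k * refAct (k - i) (0:ℝ) = 0 := by
        refine Finset.sum_eq_zero fun k _ => ?_
        rw [ActivationAux.refAct_zero, mul_zero]
      rw [hsplit, hzero, hM, hIcoeq]
      ring
  · exact ActivationAux.DD_memLp h1 h2 hb1 hb2 m
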